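/- Suppose g : [T,∞) → ℝ is C¹, nonnegative, integrable on [T,∞), tends to 0 at infinity, and satisfies |g'(t)| ≤ C e^{−βt} ∫_t^∞ g(z) dz for all t ≥ T, where C, β > 0. Then g ≡ 0 on [T₀,∞) for T₀ sufficiently large. -/

import Mathlib

open Real Filter MeasureTheory Set

/-- The improper integral of `exp (-b*x)` over `(a, ∞)`. -/
lemma integral_exp_neg_mul_Ioi' {b : ℝ} (hb : 0 < b) (a : ℝ) :
    ∫ x in Ioi a, Real.exp (-b * x) = Real.exp (-b * a) / b := by
  have hderiv : ∀ x ∈ Ici a, HasDerivAt (fun x => -Real.exp (-b * x) / b)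
      (Real.exp (-b * x)) x := by
    intro x _
    have h1 : HasDerivAt (fun x : ℝ => -b * x) (-b) x := by
      simpa using (hasDerivAt_id x).const_mul (-b)
    have h2 := h1.exp
    have h3 := (h2.neg).div_const b
    convert h3 using 1
    · rfl
    · rfl
    · rfl
    · rw [eq_div_iff hb.ne']; ring
  have hint : IntegrableOn (fun x => Real.exp (-b * x)) (Ioi a) :=
    exp_neg_integrableOn_Ioi a hb
  have hlim : Tendsto (fun x => -Real.exp (-b * x) / b) atTop (nhds 0) := by
    have : Tendsto (fun x : ℝ => Real.exp (-b * x)) atTop (nhds 0) := by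
      have h := Real.tendsto_exp_neg_atTop_nhds_zero.comp
        (Filter.Tendsto.const_mul_atTop hb tendsto_id)
      exact h.congr fun x => by simp [Function.comp, neg_mul]
    simpa using (this.neg.div_const b)
  have := integral_Ioi_of_hasDerivAt_of_tendsto' hderiv hint hlim
  rw [this]
  field_simp
  ring

/-- A nonnegative, integrable `C¹` function on `[T,∞)` tending to `0`
at infinity and satisfying `|g'(t)| ≤ C e^{-βt} ∫_t^∞ g` must vanish identically on
some half-line `[T₀, ∞)`. -/
theorem differential_inequality_forces_vanishing
    (C β T : ℝ) (hC : 0 < C) (hβ : 0 < β)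
    (g : ℝ → ℝ)
    (hg1 : ContDiffOn ℝ 1 g (Ici T))
    (hpos : ∀ t ∈ Ici T, 0 ≤ g t)
    (hint : IntegrableOn g (Ici T))
    (hlim : Tendsto g atTop (nhds 0))
    (hineq : ∀ t ∈ Ici T, |deriv g t| ≤ C * Real.exp (-β * t) * ∫ z in Ici t, g z) :
    ∃ T₀ : ℝ, ∀ t ∈ Ici T₀, g t = 0 := by
  set G : ℝ → ℝ := fun t => ∫ z in Ici t, g z with hG
  -- basic facts about `G`
  have hgint : ∀ t, T ≤ t → IntegrableOn g (Ici t) := fun t ht =>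
    hint.mono_set (Ici_subset_Ici.2 ht)
  have hGnonneg : ∀ t, T ≤ t → 0 ≤ G t := by
    intro t ht
    exact setIntegral_nonneg measurableSet_Ici fun x hx => hpos x (le_trans ht hx)
  have hGmono : ∀ t z, T ≤ t → t ≤ z → G z ≤ G t := by
    intro t z ht htz
    apply setIntegral_mono_set (hgint t ht)
    · filter_upwards [ae_restrict_mem measurableSet_Ici] with x hx
      exact hpos x (le_trans ht hx)
    · exact Filter.Eventually.of_forall (Ici_subset_Ici.2 htz)
  -- differentiability on the open half-line
  have hderiv : ∀ x ∈ Ioi T, HasDerivAt g (deriv g x) x := by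
    intro x hx
    have hdiff : DifferentiableOn ℝ g (Ici T) := hg1.differentiableOn one_ne_zero
    have := (hdiff x (mem_Ici.2 (le_of_lt hx))).differentiableAt (Ici_mem_nhds hx)
    exact this.hasDerivAt
  -- integrability of the derivative on `(t, ∞)` for `t ≥ T`
  have hderint : ∀ t, T ≤ t → IntegrableOn (fun z => deriv g z) (Ioi t) := by
    intro t ht
    have hmaj : IntegrableOn (fun z => C * G T * Real.exp (-β * z)) (Ioi t) :=
      ((exp_neg_integrableOn_Ioi t hβ).const_mul (C * G T))
    apply hmaj.integrable.mono
    · exact (measurable_deriv g).aestronglyMeasurable.restrict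
    · filter_upwards [ae_restrict_mem measurableSet_Ioi] with z hz
      have hz' : T ≤ z := le_trans ht (le_of_lt hz)
      have h1 := hineq z hz'
      have h2 : G z ≤ G T := hGmono T z le_rfl hz'
      have h3 : (0:ℝ) < Real.exp (-β * z) := Real.exp_pos _
      rw [Real.norm_eq_abs, Real.norm_eq_abs]
      calc |deriv g z| ≤ C * Real.exp (-β * z) * G z := h1
        _ ≤ C * Real.exp (-β * z) * G T := by
            apply mul_le_mul_of_nonneg_left h2
            positivity
        _ = C * G T * Real.exp (-β * z) := by ring
        _ ≤ |C * G T * Real.exp (-β * z)| := le_abs_self _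
  -- Key pointwise bound: `g t ≤ (C/β) e^{-βt} G t` for `t > T`
  have key : ∀ t, T < t → g t ≤ C / β * Real.exp (-β * t) * G t := by
    intro t ht
    have hcont : ContinuousWithinAt g (Ici t) t :=
      ((hderiv t ht).continuousAt).continuousWithinAt
    have hftc := integral_Ioi_of_hasDerivAt_of_tendsto hcont
      (fun x hx => hderiv x (lt_trans ht hx)) (hderint t (le_of_lt ht)) hlim
    -- `∫_{Ioi t} deriv g = 0 - g t`
    have hgt : g t = -∫ z in Ioi t, deriv g z := by rw [hftc]; ring
    have habs : |∫ z in Ioi t, deriv g z| ≤ ∫ z in Ioi t, |deriv g z| := by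
      simpa [Real.norm_eq_abs] using
        norm_integral_le_integral_norm (μ := volume.restrict (Ioi t)) (fun z => deriv g z)
    have hbound : (∫ z in Ioi t, |deriv g z|) ≤ ∫ z in Ioi t, C * G t * Real.exp (-β * z) := by
      apply setIntegral_mono_on (hderint t (le_of_lt ht)).abs
        ((exp_neg_integrableOn_Ioi t hβ).const_mul (C * G t)) measurableSet_Ioi
      intro z hz
      have hz' : T ≤ z := le_trans (le_of_lt ht) (le_of_lt hz)
      have h2 : G z ≤ G t := hGmono t z (le_of_lt ht) (le_of_lt hz)
      calc |deriv g z| ≤ C * Real.exp (-β * z) * G z := hineq z hz'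
        _ ≤ C * Real.exp (-β * z) * G t := by
            apply mul_le_mul_of_nonneg_left h2; positivity
        _ = C * G t * Real.exp (-β * z) := by ring
    have hval : (∫ z in Ioi t, C * G t * Real.exp (-β * z))
        = C * G t * (Real.exp (-β * t) / β) := by
      rw [MeasureTheory.integral_const_mul, integral_exp_neg_mul_Ioi' hβ]
    calc g t = -∫ z in Ioi t, deriv g z := hgt
      _ ≤ |∫ z in Ioi t, deriv g z| := neg_le_abs _
      _ ≤ ∫ z in Ioi t, |deriv g z| := habs
      _ ≤ ∫ z in Ioi t, C * G t * Real.exp (-β * z) := hbound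
      _ = C * G t * (Real.exp (-β * t) / β) := hval
      _ = C / β * Real.exp (-β * t) * G t := by ring
  -- Integrating the key bound: `G t ≤ (C/β²) e^{-βt} G t` for `t > T`
  have key2 : ∀ t, T < t → G t ≤ C / β ^ 2 * Real.exp (-β * t) * G t := by
    intro t ht
    have hGt : G t = ∫ z in Ioi t, g z := integral_Ici_eq_integral_Ioi
    have hb : (∫ z in Ioi t, g z) ≤ ∫ z in Ioi t, C / β * G t * Real.exp (-β * z) := by
      apply setIntegral_mono_on ((hgint t (le_of_lt ht)).mono_set Ioi_subset_Ici_self)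
        ((exp_neg_integrableOn_Ioi t hβ).const_mul (C / β * G t)) measurableSet_Ioi
      intro z hz
      have h2 : G z ≤ G t := hGmono t z (le_of_lt ht) (le_of_lt hz)
      calc g z ≤ C / β * Real.exp (-β * z) * G z := key z (lt_trans ht hz)
        _ ≤ C / β * Real.exp (-β * z) * G t := by
            apply mul_le_mul_of_nonneg_left h2; positivity
        _ = C / β * G t * Real.exp (-β * z) := by ring
    have hval : (∫ z in Ioi t, C / β * G t * Real.exp (-β * z))
        = C / β * G t * (Real.exp (-β * t) / β) := by
      rw [MeasureTheory.integral_const_mul, integral_exp_neg_mul_Ioi' hβ]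
    calc G t = ∫ z in Ioi t, g z := hGt
      _ ≤ ∫ z in Ioi t, C / β * G t * Real.exp (-β * z) := hb
      _ = C / β * G t * (Real.exp (-β * t) / β) := hval
      _ = C / β ^ 2 * Real.exp (-β * t) * G t := by ring
  -- choose `T₀` large
  have hsmall : Tendsto (fun t : ℝ => C / β ^ 2 * Real.exp (-β * t)) atTop (nhds 0) := by
    have : Tendsto (fun t : ℝ => Real.exp (-β * t)) atTop (nhds 0) := by
      have h := Real.tendsto_exp_neg_atTop_nhds_zero.comp
        (Filter.Tendsto.const_mul_atTop hβ tendsto_id)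
      exact h.congr fun x => by simp [Function.comp, neg_mul]
    simpa using this.const_mul (C / β ^ 2)
  have hev : ∀ᶠ t in atTop, C / β ^ 2 * Real.exp (-β * t) < 1 / 2 :=
    (hsmall.eventually (eventually_lt_nhds (by norm_num : (0:ℝ) < 1/2)))
  obtain ⟨T₀, hT₀⟩ := (hev.and (eventually_gt_atTop T)).exists
  refine ⟨T₀, fun t ht => ?_⟩
  have htT : T < t := lt_of_lt_of_le hT₀.2 ht
  -- `G t = 0`
  have hGt0 : G t = 0 := by
    have h1 := key2 t htT
    have h2 : C / β ^ 2 * Real.exp (-β * t) < 1 / 2 := by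
      calc C / β ^ 2 * Real.exp (-β * t) ≤ C / β ^ 2 * Real.exp (-β * T₀) := by
            apply mul_le_mul_of_nonneg_left _ (by positivity)
            exact Real.exp_le_exp.2 (by nlinarith [hβ, mem_Ici.1 ht])
        _ < 1 / 2 := hT₀.1
    have hG := hGnonneg t (le_of_lt htT)
    nlinarith [h1, h2, hG]
  have := key t htT
  rw [hGt0] at this
  have h0 := hpos t (le_of_lt htT)
  linarith [this]
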